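/- In the formal power series ring, (1/T) - c/((1+T)^c - 1) = ∑_{n≥1} (1 - c^n)·(B_n/n)·X^{n-1}/(n-1)!, where 1+T = e^X and B_n are Bernoulli numbers. -/

import Mathlib

open PowerSeries

theorem aux_XS (c : ℕ) :
    (X : ℚ⟦X⟧) * (PowerSeries.mk fun k =>
        (1 - (c : ℚ) ^ (k + 1)) * bernoulli (k + 1) / (Nat.factorial (k + 1) : ℚ)) =
      bernoulliPowerSeries ℚ - rescale (c : ℚ) (bernoulliPowerSeries ℚ) := by
  ext n
  simp only [bernoulliPowerSeries, rescale_mk]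
  cases n with
  | zero => simp [coeff_mk]
  | succ k =>
    simp [coeff_succ_X_mul, coeff_mk]
    ring

/-- In `ℚ⟦X⟧` with `1 + T = e^X`, one has
`1/(e^X - 1) - c/(e^{cX} - 1) = ∑_{n ≥ 1} (1 - c^n)(B_n/n) X^{n-1}/(n-1)!`,
stated after clearing the denominators `(e^X - 1)(e^{cX} - 1)`:
the coefficient of `X^k` on the series side is `(1 - c^{k+1}) B_{k+1}/(k+1)!`. -/
theorem stmt_1 (c : ℕ) (hc : 0 < c) :
    (rescale (c : ℚ) (exp ℚ) - 1) - (c : ℚ) • (exp ℚ - 1) =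
      (PowerSeries.mk fun k =>
          (1 - (c : ℚ) ^ (k + 1)) * bernoulli (k + 1) / (Nat.factorial (k + 1) : ℚ)) *
        (exp ℚ - 1) * (rescale (c : ℚ) (exp ℚ) - 1) := by
  apply mul_left_cancel₀ (X_ne_zero : (X : ℚ⟦X⟧) ≠ 0)
  rw [show (X : ℚ⟦X⟧) * ((PowerSeries.mk fun k =>
          (1 - (c : ℚ) ^ (k + 1)) * bernoulli (k + 1) / (Nat.factorial (k + 1) : ℚ)) *
        (exp ℚ - 1) * (rescale (c : ℚ) (exp ℚ) - 1)) =
      ((X : ℚ⟦X⟧) * (PowerSeries.mk fun k =>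
          (1 - (c : ℚ) ^ (k + 1)) * bernoulli (k + 1) / (Nat.factorial (k + 1) : ℚ))) *
        (exp ℚ - 1) * (rescale (c : ℚ) (exp ℚ) - 1) by ring]
  rw [aux_XS, sub_mul, sub_mul, bernoulliPowerSeries_mul_exp_sub_one]
  have h1 : rescale (c : ℚ) (bernoulliPowerSeries ℚ) * (exp ℚ - 1) *
      (rescale (c : ℚ) (exp ℚ) - 1) =
      (C (c : ℚ) * X) * (exp ℚ - 1) := by
    have : rescale (c : ℚ) (bernoulliPowerSeries ℚ) * (rescale (c : ℚ) (exp ℚ) - 1) =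
        C (c : ℚ) * X := by
      rw [show rescale (c : ℚ) (exp ℚ) - 1 = rescale (c : ℚ) (exp ℚ - 1) by
          simp [map_sub]]
      rw [← map_mul, bernoulliPowerSeries_mul_exp_sub_one, rescale_X]
    calc rescale (c : ℚ) (bernoulliPowerSeries ℚ) * (exp ℚ - 1) *
        (rescale (c : ℚ) (exp ℚ) - 1)
        = rescale (c : ℚ) (bernoulliPowerSeries ℚ) * (rescale (c : ℚ) (exp ℚ) - 1) *
          (exp ℚ - 1) := by ring
      _ = (C (c : ℚ) * X) * (exp ℚ - 1) := by rw [this]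
  rw [h1]
  rw [smul_eq_C_mul]
  ring
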